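/- In an interference-limited single-tier network, the peak UE ergodic rate E[R] = Σ_{i=1}^M q(α_i) B_i does not depend on the BS density λ or the transmit powers {P_i}, where q(α) = ∫₀^∞ 1/((1+t)(1 + ρ(t,α,1))) dt. -/

import Mathlib

open MeasureTheory Set

/-- `ρ(t, α, β) = ∫₁^∞ t/(t + β x^{α/2}) dx`. -/
noncomputable def rho (t α β : ℝ) : ℝ := ∫ x in Ioi (1 : ℝ), t / (t + β * x ^ (α / 2))

/-- `q(α) = ∫₀^∞ 1/((1+t)(1 + ρ(t, α, 1))) dt`. -/
noncomputable def q (α : ℝ) : ℝ := ∫ t in Ioi (0 : ℝ), 1 / ((1 + t) * (1 + rho t α 1))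

lemma rho_nonneg {t a : ℝ} (ht : 0 < t) : 0 ≤ rho t a 1 := by
  apply setIntegral_nonneg measurableSet_Ioi
  intro x hx
  have hx1 : (1 : ℝ) < x := hx
  have hpow : 0 < x ^ (a / 2) := Real.rpow_pos_of_pos (by linarith) _
  positivity

lemma integral_id_mul_exp_neg_mul_sq {b : ℝ} (hb : 0 < b) :
    ∫ r in Ioi (0 : ℝ), r * Real.exp (-(b * r ^ 2)) = 1 / (2 * b) := by
  have key : ∫ r in Ioi (0 : ℝ), r * Real.exp (-(b * r ^ 2))
      = 0 - (-Real.exp (-(b * 0 ^ 2)) / (2 * b)) := by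
    apply integral_Ioi_of_hasDerivAt_of_tendsto'
      (f := fun r => -Real.exp (-(b * r ^ 2)) / (2 * b))
    · intro x _
      have h1 : HasDerivAt (fun r : ℝ => -(b * r ^ 2)) (-(b * (2 * x))) x := by
        have := ((hasDerivAt_pow 2 x).const_mul b).neg
        exact (by simpa [mul_comm, mul_assoc, mul_left_comm] using this :
          HasDerivAt (-fun y : ℝ => b * y ^ 2) (-(b * (2 * x))) x)
      have h2 := (h1.exp).neg.div_const (2 * b)
      refine h2.congr_deriv ?_
      field_simp
    · have := (integrable_mul_exp_neg_mul_sq hb).integrableOn (s := Ioi (0:ℝ))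
      simpa [neg_mul] using this
    · have h1 : Filter.Tendsto (fun r : ℝ => -(b * r ^ 2)) Filter.atTop Filter.atBot := by
        apply Filter.tendsto_neg_atBot_iff.mpr
        exact (Filter.tendsto_pow_atTop (by norm_num)).const_mul_atTop hb
      have h2 := (Real.tendsto_exp_atBot.comp h1).neg.div_const (2 * b)
      simpa using h2
  rw [key]
  norm_num
  ring

/-- In an interference-limited (noise `w = 0`) fully-loaded single-tier network, the peak
UE ergodic rate equals `Σᵢ q(αᵢ) Bᵢ`, which depends on neither the BS density `λ` nor the
transmit powers `Pᵢ`. -/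
theorem stmt12 (M : ℕ) (B α P : Fin M → ℝ)
    (hB : ∀ i, 0 < B i) (hα : ∀ i, 2 < α i) (hP : ∀ i, 0 < P i)
    (lam : ℝ) (hlam : 0 < lam) :
    (∑ i, B i * ∫ t in Ioi (0 : ℝ), ∫ r in Ioi (0 : ℝ),
        (2 * Real.pi * lam * r / (1 + t))
          * Real.exp (-((0 : ℝ) * t * r ^ (α i) / P i))
          * Real.exp (-(Real.pi * lam * rho t (α i) 1 * r ^ 2))
          * Real.exp (-(Real.pi * lam * r ^ 2)))
      = ∑ i, q (α i) * B i := by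
  have hpi := Real.pi_pos
  refine Finset.sum_congr rfl fun i _ => ?_
  rw [mul_comm (q (α i)) (B i)]
  congr 1
  unfold q
  apply setIntegral_congr_fun measurableSet_Ioi
  intro t ht
  beta_reduce
  have ht0 : (0 : ℝ) < t := ht
  set ρ := rho t (α i) 1 with hρ
  have hρ0 : 0 ≤ ρ := rho_nonneg ht0
  have hb : 0 < Real.pi * lam * (ρ + 1) := by positivity
  have hstep : ∀ r : ℝ,
      (2 * Real.pi * lam * r / (1 + t))
        * Real.exp (-((0 : ℝ) * t * r ^ (α i) / P i))
        * Real.exp (-(Real.pi * lam * ρ * r ^ 2))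
        * Real.exp (-(Real.pi * lam * r ^ 2))
      = (2 * Real.pi * lam / (1 + t))
        * (r * Real.exp (-(Real.pi * lam * (ρ + 1) * r ^ 2))) := by
    intro r
    rw [show ((0 : ℝ) * t * r ^ (α i) / P i) = 0 by ring, neg_zero, Real.exp_zero,
      mul_one, mul_assoc, ← Real.exp_add]
    ring_nf
  simp_rw [hstep]
  rw [MeasureTheory.integral_const_mul, integral_id_mul_exp_neg_mul_sq hb]
  have h1t : (0 : ℝ) < 1 + t := by linarith
  field_simp
  ring
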